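/- In a correct packet switching network, if there is a local deadlock then there is a weak deadlock: L(K) ≠ ∅ implies W(K) ≠ ∅. Moreover, from any local deadlock state s a weak deadlock state s' is reachable via process and receive steps only. -/

import Mathlib

structure PSN where
  Node : Type
  Chan : Type
  fintypeNode : Fintype Node
  decEqNode : DecidableEq Node
  fintypeChan : Fintype Chan
  decEqChan : DecidableEq Chan
  M : Finset Node
  hM : 2 ≤ M.card
  source : Chan → Node
  target : Chan → Node
  rout : Node → Node → Chan
  rout_source : ∀ n m, m ∈ M → m ≠ n → source (rout n m) = n

attribute [instance] PSN.fintypeNode PSN.decEqNode PSN.fintypeChan PSN.decEqChan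

namespace PSN

variable (P : PSN)

/-- A state records the content of every channel: `none` is an empty channel,
`some m` is a message destined for terminal `m`. -/
abbrev State := P.Chan → Option P.Node

/-- The next hop of a message destined for `m` at node `n`. -/
def nexthop (m n : P.Node) : P.Node := P.target (P.rout n m)

/-- The next channel for a message destined for `m` currently in channel `c`. -/
def nextC (m : P.Node) (c : P.Chan) : P.Chan := P.rout (P.target c) m

/-- The network is correct: every message can reach its destination in a
bounded number of hops. -/
def Correct : Prop := ∀ m ∈ P.M, ∀ n : P.Node, ∃ k : ℕ, (P.nexthop m)^[k] n = m

/-- Initial states: all channels empty. -/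
def init (s : P.State) : Prop := ∀ c, s c = none

/-- Send step: terminal `m` inserts a message for terminal `m' ≠ m` into the
(currently empty) channel `rout m m'`. -/
def sendStep (s s' : P.State) : Prop :=
  ∃ m m', m ∈ P.M ∧ m' ∈ P.M ∧ m ≠ m' ∧ s (P.rout m m') = none ∧
    s' = Function.update s (P.rout m m') (some m')

/-- Process step: a node forwards a message `m` from an incoming channel `c`
(with `target c ≠ m`) to the routed outgoing channel, provided it is empty. -/
def procStep (s s' : P.State) : Prop :=
  ∃ m c, m ∈ P.M ∧ s c = some m ∧ P.target c ≠ m ∧ s (P.nextC m c) = none ∧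
    s' = Function.update (Function.update s c none) (P.nextC m c) (some m)

/-- Receive step: terminal `m` removes a message destined for it from an
incoming channel. -/
def recvStep (s s' : P.State) : Prop :=
  ∃ m c, m ∈ P.M ∧ s c = some m ∧ P.target c = m ∧ s' = Function.update s c none

/-- Send, process or receive transitions. -/
def stepSPR (s s' : P.State) : Prop := P.sendStep s s' ∨ P.procStep s s' ∨ P.recvStep s s'

/-- Process or receive transitions. -/
def stepPR (s s' : P.State) : Prop := P.procStep s s' ∨ P.recvStep s s'

/-- The (total) transition relation of the Kripke structure: send, process and
receive steps, plus self-loops on otherwise-stuck states. -/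
def step (s s' : P.State) : Prop := P.stepSPR s s' ∨ (s = s' ∧ ∀ t, ¬ P.stepSPR s t)

/-- Reachable states: reachable from an initial state. -/
def reachable (s : P.State) : Prop := ∃ s₀, P.init s₀ ∧ Relation.ReflTransGen P.step s₀ s

/-- Global deadlock: no transition to a distinct state. -/
def globalDeadlock (s : P.State) : Prop := ∀ s', P.step s s' → s' = s

/-- Local deadlock at channel `c`: `c` is nonempty and keeps the same content
along every execution. -/
def localDeadlockAt (c : P.Chan) (s : P.State) : Prop :=
  ∀ s', Relation.ReflTransGen P.step s s' → s c ≠ none ∧ s' c = s c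

/-- Local deadlock: some channel is locally deadlocked. -/
def localDeadlock (s : P.State) : Prop := ∃ c, P.localDeadlockAt c s

/-- Weak deadlock: a non-initial state with no process or receive step. -/
def weakDeadlock (s : P.State) : Prop := ¬ P.init s ∧ ∀ s', ¬ P.stepPR s s'

/-- `Nval c v` is the number of hops needed for the content `v` of channel `c`
to reach its destination: `0` for the empty channel, and for a message `m`
one more than the least `l` with `target (nextC m ^[l] c) = m`. -/
noncomputable def Nval (c : P.Chan) : Option P.Node → ℕ
  | none => 0
  | some m => sInf {l | P.target ((P.nextC m)^[l] c) = m} + 1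

/-- The weight of a state: total number of hops needed for all messages
currently in the network to reach their destinations. -/
noncomputable def wt (s : P.State) : ℕ := ∑ c : P.Chan, P.Nval c (s c)

end PSN

namespace PSN

variable (P : PSN)

lemma target_iter (m : P.Node) (c : P.Chan) :
    ∀ l, P.target ((P.nextC m)^[l] c) = (P.nexthop m)^[l] (P.target c) := by
  intro l
  induction l with
  | zero => rfl
  | succ l ih =>
    rw [Function.iterate_succ_apply', Function.iterate_succ_apply', ← ih]
    rfl

lemma wt_decrease (hc : P.Correct) {s s' : P.State} (h : P.stepPR s s') :
    P.wt s' < P.wt s := by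
  rcases h with ⟨m, c, hm, hsc, htc, hnone, rfl⟩ | ⟨m, c, hm, hsc, htc, rfl⟩
  · -- process step
    set c' := P.nextC m c with hc'
    have hne : c ≠ c' := by
      intro h; rw [← h] at hnone; rw [hsc] at hnone; exact Option.some_ne_none m hnone
    -- value facts
    have hS : {l | P.target ((P.nextC m)^[l] c) = m}.Nonempty := by
      obtain ⟨k, hk⟩ := hc m hm (P.target c)
      exact ⟨k, by rw [Set.mem_setOf_eq, P.target_iter]; exact hk⟩
    set k0 := sInf {l | P.target ((P.nextC m)^[l] c) = m} with hk0
    have hk0mem : k0 ∈ {l | P.target ((P.nextC m)^[l] c) = m} := Nat.sInf_mem hS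
    have hk0pos : 0 < k0 := by
      rcases Nat.eq_zero_or_pos k0 with h | h
      · exfalso; rw [h] at hk0mem; exact htc hk0mem
      · exact h
    have hmem' : k0 - 1 ∈ {l | P.target ((P.nextC m)^[l] c') = m} := by
      rw [Set.mem_setOf_eq, hc', ← Function.iterate_succ_apply,
        Nat.succ_eq_add_one, Nat.sub_add_cancel hk0pos]
      exact hk0mem
    have hkey : P.Nval c' (some m) < P.Nval c (some m) := by
      have h1 : sInf {l | P.target ((P.nextC m)^[l] c') = m} ≤ k0 - 1 :=
        Nat.sInf_le hmem'
      simp only [PSN.Nval, ← hk0]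
      omega
    -- sum manipulation
    set g : P.Chan → ℕ := fun x =>
      P.Nval x (Function.update (Function.update s c none) c' (some m) x) with hg
    set f : P.Chan → ℕ := fun x => P.Nval x (s x) with hf
    have hgc : g c = 0 := by
      simp [hg, Function.update_apply, hne, PSN.Nval]
    have hgc' : g c' = P.Nval c' (some m) := by simp [hg]
    have hfc : f c = P.Nval c (some m) := by simp [hf, hsc]
    have hfc' : f c' = 0 := by simp [hf, hnone, PSN.Nval]
    have heq : ∀ x ∈ (Finset.univ.erase c).erase c', g x = f x := by
      intro x hx
      have hx1 : x ≠ c' := Finset.ne_of_mem_erase hx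
      have hx2 : x ≠ c := Finset.ne_of_mem_erase (Finset.mem_of_mem_erase hx)
      simp [hg, hf, Function.update_apply, hx1, hx2]
    have hsum : ∀ h : P.Chan → ℕ, ∑ x, h x =
        h c + (h c' + ∑ x ∈ (Finset.univ.erase c).erase c', h x) := by
      intro h
      rw [Finset.add_sum_erase _ _ (Finset.mem_erase.mpr ⟨(Ne.symm hne), Finset.mem_univ c'⟩),
        Finset.add_sum_erase _ _ (Finset.mem_univ c)]
    show ∑ x, g x < ∑ x, f x
    have hA : ∑ x ∈ (Finset.univ.erase c).erase c', g x =
        ∑ x ∈ (Finset.univ.erase c).erase c', f x := Finset.sum_congr rfl heq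
    rw [hsum g, hsum f, hA, hgc, hgc', hfc, hfc']
    omega
  · -- receive step
    apply Finset.sum_lt_sum
    · intro x _
      rcases eq_or_ne x c with rfl | hx
      · simp [PSN.Nval]
      · simp [Function.update_apply, hx]
    · exact ⟨c, Finset.mem_univ c, by simp [hsc, PSN.Nval]⟩

lemma exists_nf (hc : P.Correct) :
    ∀ n (s : P.State), P.wt s ≤ n →
      ∃ s', Relation.ReflTransGen P.stepPR s s' ∧ ∀ t, ¬ P.stepPR s' t := by
  intro n
  induction n with
  | zero =>
    intro s hs
    by_cases h : ∃ t, P.stepPR s t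
    · obtain ⟨t, ht⟩ := h
      have := P.wt_decrease hc ht
      omega
    · exact ⟨s, .refl, fun t ht => h ⟨t, ht⟩⟩
  | succ n ih =>
    intro s hs
    by_cases h : ∃ t, P.stepPR s t
    · obtain ⟨t, ht⟩ := h
      have := P.wt_decrease hc ht
      obtain ⟨s', h1, h2⟩ := ih t (by omega)
      exact ⟨s', .head ht h1, h2⟩
    · exact ⟨s, .refl, fun t ht => h ⟨t, ht⟩⟩

end PSN

/-- If there is a local deadlock then there is a weak deadlock; moreover, from
any local deadlock state a weak deadlock state is reachable via process and
receive steps only. -/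
theorem stmt10 (P : PSN) (hc : P.Correct) :
    ((∃ s, P.localDeadlock s) → ∃ s, P.weakDeadlock s) ∧
    ∀ s, P.localDeadlock s →
      ∃ s', Relation.ReflTransGen P.stepPR s s' ∧ P.weakDeadlock s' := by
  have main : ∀ s, P.localDeadlock s →
      ∃ s', Relation.ReflTransGen P.stepPR s s' ∧ P.weakDeadlock s' := by
    intro s ⟨c, hld⟩
    obtain ⟨s', hpr, hnf⟩ := P.exists_nf hc (P.wt s) s le_rfl
    have hstep : Relation.ReflTransGen P.step s s' :=
      Relation.ReflTransGen.mono (p := P.step) (fun a b h => Or.inl (Or.inr h)) s s' hpr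
    obtain ⟨hne, heq⟩ := hld s' hstep
    refine ⟨s', hpr, ?_, hnf⟩
    intro hinit
    exact hne (heq ▸ hinit c)
  refine ⟨?_, main⟩
  rintro ⟨s, hs⟩
  obtain ⟨s', _, hw⟩ := main s hs
  exact ⟨s', hw⟩
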